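/- Let M be a maximal proper quadratic module in a *-ring R. Then the ideal J_M = {a ∈ R : a·u·u*·a* ∈ M ∩ (−M) for all u ∈ R} is *-invariant: if a ∈ J_M then a* ∈ J_M. -/

import Mathlib

def IsQuadraticModule {R : Type*} [Ring R] [StarRing R] (M : Set R) : Prop :=
  (∀ a ∈ M, star a = a) ∧ (1 : R) ∈ M ∧ (∀ a ∈ M, ∀ b ∈ M, a + b ∈ M) ∧
    ∀ r : R, ∀ a ∈ M, r * a * star r ∈ M

def IsProperQuadraticModule {R : Type*} [Ring R] [StarRing R] (M : Set R) : Prop :=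
  IsQuadraticModule M ∧ (-1 : R) ∉ M

def IsMaximalProperQuadraticModule {R : Type*} [Ring R] [StarRing R] (M : Set R) : Prop :=
  IsProperQuadraticModule M ∧
    ∀ M' : Set R, IsProperQuadraticModule M' → M ⊆ M' → M' = M

def qmIdeal {R : Type*} [Ring R] [StarRing R] (M : Set R) : Set R :=
  {a : R | ∀ u : R, a * (u * star u) * star a ∈ M ∩ (-M)}

lemma qm_key {R : Type*} [Ring R] [StarRing R] {M : Set R}
    (hM : IsMaximalProperQuadraticModule M) (c : R)
    (hc : ∀ v : R, c * (v * star v) * star c ∈ M ∧ -(c * (v * star v) * star c) ∈ M) :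
    -(star c * c) ∈ M := by
  obtain ⟨⟨⟨hsym, h1, hadd, hconj⟩, hproper⟩, hmax⟩ := hM
  have h0 : (0:R) ∈ M := by simpa using hconj 0 1 h1
  -- conjugation preserves "both signs in M"
  have hconjB : ∀ (r : R) {x : R}, x ∈ M → -x ∈ M →
      (r * x * star r ∈ M ∧ -(r * x * star r) ∈ M) := by
    intro r x hx hnx
    refine ⟨hconj r x hx, ?_⟩
    have := hconj r (-x) hnx
    simpa [neg_mul, mul_neg] using this
  -- polarization
  have hpol : ∀ u v : R, (c * (u * star v + v * star u) * star c ∈ M ∧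
      -(c * (u * star v + v * star u) * star c) ∈ M) := by
    intro u v
    obtain ⟨huv1, huv2⟩ := hc (u + v)
    obtain ⟨hu1, hu2⟩ := hc u
    obtain ⟨hv1, hv2⟩ := hc v
    have e : c * (u * star v + v * star u) * star c
        = c * ((u+v) * star (u+v)) * star c + -(c * (u * star u) * star c)
          + -(c * (v * star v) * star c) := by
      simp only [star_add]; noncomm_ring
    constructor
    · rw [e]; exact hadd _ (hadd _ huv1 _ hu2) _ hv2
    · have e' : -(c * (u * star v + v * star u) * star c)
          = -(c * ((u+v) * star (u+v)) * star c) + c * (u * star u) * star c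
            + c * (v * star v) * star c := by
        simp only [star_add]; noncomm_ring
      rw [e']; exact hadd _ (hadd _ huv2 _ hu1) _ hv1
  set g : R := star c * c with hg
  -- the pair lemma
  have pair : ∀ r s : R,
      -((r * g * star r) * (s * g * star s) + (s * g * star s) * (r * g * star r)) ∈ M := by
    intro r s
    obtain ⟨hZ1, hZ2⟩ := hpol (star r) (star s)
    rw [star_star, star_star] at hZ1 hZ2
    set Z1 : R := c * (star r * s + star s * r) * star c with hZ1def
    obtain ⟨hν1, hν2⟩ := hconjB ((r + s) * star c) hZ1 hZ2
    obtain ⟨hα1, hα2⟩ := hconjB (r * star c) hZ1 hZ2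
    obtain ⟨hβ1, hβ2⟩ := hconjB (s * star c) hZ1 hZ2
    obtain ⟨hγ0a, hγ0b⟩ := hc (star s)
    rw [star_star] at hγ0a hγ0b
    obtain ⟨hγ1, hγ2⟩ := hconjB (r * star c) hγ0a hγ0b
    obtain ⟨hδ0a, hδ0b⟩ := hc (star r)
    rw [star_star] at hδ0a hδ0b
    obtain ⟨hδ1, hδ2⟩ := hconjB (s * star c) hδ0a hδ0b
    set e : R := r * g * star s + s * g * star r with he_def
    have hestar : star e = e := by
      rw [he_def, hg]
      simp only [star_add, star_mul, star_star]
      rw [add_comm]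
      noncomm_ring
    have he2 : e * e ∈ M := by
      have := hconj e 1 h1
      rwa [mul_one, hestar] at this
    have key_eq :
        -((r * g * star r) * (s * g * star s) + (s * g * star s) * (r * g * star r))
          = -((r + s) * star c * Z1 * star ((r + s) * star c))
            + r * star c * Z1 * star (r * star c)
            + s * star c * Z1 * star (s * star c)
            + e * e
            + -(r * star c * (c * (star s * s) * star c) * star (r * star c))
            + -(s * star c * (c * (star r * r) * star c) * star (s * star c)) := by
      rw [hZ1def, he_def, hg]
      simp only [star_add, star_mul, star_star]
      noncomm_ring
    rw [key_eq]
    exact hadd _ (hadd _ (hadd _ (hadd _ (hadd _ hν2 _ hα1) _ hβ1) _ he2) _ hγ2) _ hδ2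
  -- the cone generated by g
  set S : Set R := {x : R | ∃ r : R, r * g * star r = x} with hS
  set C : AddSubmonoid R := AddSubmonoid.closure S with hC
  have hgenC : ∀ r : R, r * g * star r ∈ C := fun r =>
    AddSubmonoid.subset_closure ⟨r, rfl⟩
  -- cross terms
  have crossM : ∀ σ ∈ C, ∀ τ ∈ C, -(σ * τ + τ * σ) ∈ M := by
    intro σ hσ
    induction hσ using AddSubmonoid.closure_induction with
    | mem x hx =>
      intro τ hτ
      induction hτ using AddSubmonoid.closure_induction with
      | mem y hy =>
        obtain ⟨r, hr⟩ := hx; obtain ⟨s, hs⟩ := hy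
        rw [← hr, ← hs]; exact pair r s
      | zero => simpa using h0
      | add y z _ _ hy hz =>
        have e : -(x * (y + z) + (y + z) * x) = -(x * y + y * x) + -(x * z + z * x) := by
          noncomm_ring
        rw [e]; exact hadd _ hy _ hz
    | zero => intro τ hτ; simpa using h0
    | add x y _ _ hx hy =>
      intro τ hτ
      have e : -((x + y) * τ + τ * (x + y)) = -(x * τ + τ * x) + -(y * τ + τ * y) := by
        noncomm_ring
      rw [e]; exact hadd _ (hx τ hτ) _ (hy τ hτ)
  -- negative squares
  have negsq : ∀ σ ∈ C, -(σ * σ) ∈ M := by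
    intro σ hσ
    induction hσ using AddSubmonoid.closure_induction with
    | mem x hx =>
      obtain ⟨r, hr⟩ := hx
      obtain ⟨_, h2⟩ := hc (star r)
      rw [star_star] at h2
      have := hconj (r * star c) _ h2
      have e : -(x * x) = r * star c * -(c * (star r * r) * star c) * star (r * star c) := by
        rw [← hr, hg]; simp only [star_mul, star_star]; noncomm_ring
      rw [e]; exact this
    | zero => simpa using h0
    | add x y hxC hyC hx hy =>
      have e : -((x + y) * (x + y)) = -(x * x) + -(y * y) + -(x * y + y * x) := by
        noncomm_ring
      rw [e]; exact hadd _ (hadd _ hx _ hy) _ (crossM x hxC y hyC)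
  -- C is closed under conjugation
  have conjC : ∀ σ ∈ C, ∀ r : R, r * σ * star r ∈ C := by
    intro σ hσ
    induction hσ using AddSubmonoid.closure_induction with
    | mem x hx =>
      intro r
      obtain ⟨s, hs⟩ := hx
      refine AddSubmonoid.subset_closure ⟨r * s, ?_⟩
      rw [← hs]; simp only [star_mul]; noncomm_ring
    | zero => intro r; simpa using C.zero_mem
    | add x y _ _ hx hy =>
      intro r
      have e : r * (x + y) * star r = r * x * star r + r * y * star r := by noncomm_ring
      rw [e]; exact C.add_mem (hx r) (hy r)
  -- the enlarged quadratic module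
  set M' : Set R := {s : R | star s = s ∧ ∃ σ ∈ C, s + σ ∈ M} with hM'
  have hMM' : M ⊆ M' := by
    intro m hm
    exact ⟨hsym m hm, 0, C.zero_mem, by simpa using hm⟩
  have hM'qm : IsQuadraticModule M' := by
    refine ⟨fun a ha => ha.1, hMM' h1, ?_, ?_⟩
    · rintro a ⟨ha1, σ, hσ, ha2⟩ b ⟨hb1, τ, hτ, hb2⟩
      refine ⟨by rw [star_add, ha1, hb1], σ + τ, C.add_mem hσ hτ, ?_⟩
      have e : a + b + (σ + τ) = (a + σ) + (b + τ) := by abel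
      rw [e]; exact hadd _ ha2 _ hb2
    · rintro r a ⟨ha1, σ, hσ, ha2⟩
      refine ⟨by simp only [star_mul, star_star, ha1, mul_assoc], r * σ * star r, conjC σ hσ r, ?_⟩
      have e : r * a * star r + r * σ * star r = r * (a + σ) * star r := by noncomm_ring
      rw [e]; exact hconj r _ ha2
  have hM'proper : (-1 : R) ∉ M' := by
    rintro ⟨-, σ, hσC, hσM⟩
    -- -1 + σ ∈ M
    set m₀ : R := -1 + σ with hm₀
    have hm₀M : m₀ ∈ M := hσM
    have hm₀star : star m₀ = m₀ := hsym _ hm₀M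
    have hsq : m₀ * m₀ ∈ M := by
      have := hconj m₀ 1 h1
      rwa [mul_one, hm₀star] at this
    have hns : -(σ * σ) ∈ M := negsq σ hσC
    have e : (-1 : R) = -(σ * σ) + m₀ + m₀ + m₀ * m₀ := by
      rw [hm₀]; noncomm_ring
    exact hproper (e ▸ hadd _ (hadd _ (hadd _ hns _ hm₀M) _ hm₀M) _ hsq)
  have hM'eq : M' = M := hmax M' ⟨hM'qm, hM'proper⟩ hMM'
  have hgstar : star g = g := by rw [hg]; simp [star_mul, star_star]
  have : -g ∈ M' := by
    refine ⟨by rw [star_neg, hgstar], g, ?_, by simpa using h0⟩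
    simpa using hgenC 1
  rw [hM'eq] at this
  exact this

theorem qmIdeal_star_invariant {R : Type*} [Ring R] [StarRing R]
    {M : Set R} (hM : IsMaximalProperQuadraticModule M) :
    ∀ a ∈ qmIdeal M, star a ∈ qmIdeal M := by
  intro a ha u
  obtain ⟨⟨⟨hsym, h1, hadd, hconj⟩, hproper⟩, hmax⟩ := hM
  set c : R := star u * a with hc_def
  have hc : ∀ v : R, c * (v * star v) * star c ∈ M ∧ -(c * (v * star v) * star c) ∈ M := by
    intro v
    have h := ha v
    obtain ⟨h1', h2'⟩ := h
    rw [Set.mem_neg] at h2'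
    have e : c * (v * star v) * star c
        = star u * (a * (v * star v) * star a) * star (star u) := by
      rw [hc_def]; simp only [star_mul, star_star]; noncomm_ring
    constructor
    · rw [e]; exact hconj _ _ h1'
    · rw [e]
      have := hconj (star u) _ h2'
      simpa [neg_mul, mul_neg] using this
  have hneg : -(star c * c) ∈ M := qm_key ⟨⟨⟨hsym, h1, hadd, hconj⟩, hproper⟩, hmax⟩ c hc
  have hpos : star c * c ∈ M := by
    have := hconj (star c) 1 h1
    rwa [mul_one, star_star] at this
  have e : star a * (u * star u) * star (star a) = star c * c := by
    rw [hc_def]; simp only [star_mul, star_star]; noncomm_ring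
  constructor
  · rw [e]; exact hpos
  · rw [Set.mem_neg, e]; exact hneg
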